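/- Let X be a nontrivial real normed linear space. Then DW(X) = sup{ (1+t)‖u+v‖ / ‖u+tv‖ : u, v ∈ S_X, 0 < t < 1 }. -/

import Mathlib

/-- Auxiliary: the DW value for `x, y` with `‖y‖ ≤ ‖x‖` lies in the second set. -/
lemma dw_aux {X : Type*} [NormedAddCommGroup X] [NormedSpace ℝ X] [Nontrivial X]
    {x y : X} (hx : x ≠ 0) (hy : y ≠ 0) (hxy : x ≠ y) (hle : ‖y‖ ≤ ‖x‖) :
    ∃ u v : X, ∃ t : ℝ, ‖u‖ = 1 ∧ ‖v‖ = 1 ∧ 0 < t ∧ t < 1 ∧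
      (‖x‖ + ‖y‖) / ‖x - y‖ * ‖‖x‖⁻¹ • x - ‖y‖⁻¹ • y‖ =
        (1 + t) * ‖u + v‖ / ‖u + t • v‖ := by
  have ha : (0:ℝ) < ‖x‖ := norm_pos_iff.mpr hx
  have hb : (0:ℝ) < ‖y‖ := norm_pos_iff.mpr hy
  have hD : (0:ℝ) < ‖x - y‖ := by
    rw [norm_pos_iff, sub_ne_zero]; exact hxy
  rcases eq_or_lt_of_le hle with heq | hlt
  · -- ‖x‖ = ‖y‖ : the value equals 2
    obtain ⟨u, hu⟩ := exists_norm_eq X one_pos.le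
    refine ⟨u, u, 1/2, hu, hu, by norm_num, by norm_num, ?_⟩
    have h1 : ‖‖x‖⁻¹ • x - ‖y‖⁻¹ • y‖ = ‖x‖⁻¹ * ‖x - y‖ := by
      rw [heq, ← smul_sub, norm_smul, Real.norm_eq_abs, abs_inv, abs_of_pos ha]
    have h2 : (‖x‖ + ‖y‖) / ‖x - y‖ * ‖‖x‖⁻¹ • x - ‖y‖⁻¹ • y‖ = 2 := by
      rw [h1, heq]; field_simp; ring
    have h3 : u + u = (2:ℝ) • u := (two_smul ℝ u).symm
    have h4 : u + (1/2 : ℝ) • u = (3/2 : ℝ) • u := by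
      rw [← one_smul ℝ u, smul_smul, ← add_smul]; norm_num
    rw [h2, h3, h4, norm_smul, norm_smul, hu, Real.norm_eq_abs, Real.norm_eq_abs]
    rw [abs_of_pos (by norm_num : (0:ℝ) < 3/2)]
    norm_num
  · -- ‖y‖ < ‖x‖
    refine ⟨‖x‖⁻¹ • x, -(‖y‖⁻¹ • y), ‖y‖ / ‖x‖, ?_, ?_, ?_, ?_, ?_⟩
    · rw [norm_smul, Real.norm_eq_abs, abs_inv, abs_of_pos ha, inv_mul_cancel₀ ha.ne']
    · rw [norm_neg, norm_smul, Real.norm_eq_abs, abs_inv, abs_of_pos hb,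
        inv_mul_cancel₀ hb.ne']
    · positivity
    · rw [div_lt_one ha]; exact hlt
    · have hs : ‖y‖ / ‖x‖ * ‖y‖⁻¹ = ‖x‖⁻¹ := by field_simp
      have hden : ‖x‖⁻¹ • x + (‖y‖ / ‖x‖) • -(‖y‖⁻¹ • y) = ‖x‖⁻¹ • (x - y) := by
        rw [smul_neg, smul_smul, hs, smul_sub]
        exact (sub_eq_add_neg _ _).symm
      have hnum : ‖x‖⁻¹ • x + -(‖y‖⁻¹ • y) = ‖x‖⁻¹ • x - ‖y‖⁻¹ • y := by
        rw [sub_eq_add_neg]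
      rw [hden, hnum, norm_smul, Real.norm_eq_abs, abs_inv, abs_of_pos ha]
      field_simp

/-- `DW(X) = sup { (1+t)‖u+v‖ / ‖u+tv‖ : u, v ∈ S_X, 0 < t < 1 }`. -/
theorem dunkl_williams_eq_DW5 {X : Type*} [NormedAddCommGroup X] [NormedSpace ℝ X]
    [Nontrivial X] :
    sSup {c : ℝ | ∃ x y : X, x ≠ 0 ∧ y ≠ 0 ∧ x ≠ y ∧
      c = (‖x‖ + ‖y‖) / ‖x - y‖ * ‖‖x‖⁻¹ • x - ‖y‖⁻¹ • y‖} =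
    sSup {c : ℝ | ∃ u v : X, ∃ t : ℝ, ‖u‖ = 1 ∧ ‖v‖ = 1 ∧ 0 < t ∧ t < 1 ∧
      c = (1 + t) * ‖u + v‖ / ‖u + t • v‖} := by
  congr 1
  ext c
  simp only [Set.mem_setOf_eq]
  constructor
  · rintro ⟨x, y, hx, hy, hxy, rfl⟩
    rcases le_total ‖y‖ ‖x‖ with hle | hle
    · exact dw_aux hx hy hxy hle
    · have := dw_aux hy hx (Ne.symm hxy) hle
      rwa [add_comm ‖y‖, norm_sub_rev y x, norm_sub_rev (‖y‖⁻¹ • y)] at this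
  · rintro ⟨u, v, t, hu, hv, ht0, ht1, rfl⟩
    have hv0 : v ≠ 0 := by intro h; rw [h, norm_zero] at hv; norm_num at hv
    have hu0 : u ≠ 0 := by intro h; rw [h, norm_zero] at hu; norm_num at hu
    refine ⟨u, -(t • v), hu0, ?_, ?_, ?_⟩
    · simp only [neg_ne_zero]
      exact smul_ne_zero ht0.ne' hv0
    · intro h
      have : ‖u‖ = ‖-(t • v)‖ := by rw [← h]
      rw [hu, norm_neg, norm_smul, Real.norm_eq_abs, abs_of_pos ht0, hv, mul_one] at this
      exact absurd this.symm ht1.ne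
    · have h1 : ‖-(t • v)‖ = t := by
        rw [norm_neg, norm_smul, Real.norm_eq_abs, abs_of_pos ht0, hv, mul_one]
      have h2 : u - -(t • v) = u + t • v := by abel
      have h3 : ‖-(t • v)‖⁻¹ • -(t • v) = -v := by
        rw [h1, smul_neg, smul_smul, inv_mul_cancel₀ ht0.ne', one_smul]
      rw [h3, h1, h2, hu, inv_one, one_smul, sub_neg_eq_add]
      ring
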